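/- arXiv:1101.3563 — 6 statements merged into one kernel-verified Lean document; each statement's English description precedes it below -/
import Mathlib

section
/- Let V, R : ℝ → ℝ be differentiable functions on [n+2, ∞) (n ≥ 1 a real parameter) with V(c) > 0, 0 ≤ R(c) ≤ (n/2)·V(c), satisfying the ODE (n/2)·V(c) − R(c) = c·V'(c) − R'(c). Define P(c) = V(c)/c^(n/2) − R(c)/c^(n/2+1). Then P'(c) = −(1 − (n+2)/(2c))·R(c)/c^(n/2+1) for all c ≥ n+2. -/
open Real Filter MeasureTheory

theorem stmt_0 (n : ℝ) (hn : 1 ≤ n) (V R V' R' : ℝ → ℝ)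
    (hV : ∀ c ≥ n + 2, HasDerivAt V (V' c) c)
    (hR : ∀ c ≥ n + 2, HasDerivAt R (R' c) c)
    (hVpos : ∀ c ≥ n + 2, 0 < V c)
    (hRnonneg : ∀ c ≥ n + 2, 0 ≤ R c)
    (hRle : ∀ c ≥ n + 2, R c ≤ n / 2 * V c)
    (hode : ∀ c ≥ n + 2, n / 2 * V c - R c = c * V' c - R' c) :
    ∀ c ≥ n + 2,
      HasDerivAt (fun c : ℝ => V c / c ^ (n / 2 : ℝ) - R c / c ^ (n / 2 + 1 : ℝ))
        (-(1 - (n + 2) / (2 * c)) * R c / c ^ (n / 2 + 1 : ℝ)) c := by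
  intro c hc
  have hc0 : (0:ℝ) < c := by linarith
  have ha : (0:ℝ) < c ^ (n / 2 : ℝ) := Real.rpow_pos_of_pos hc0 _
  have hb : (0:ℝ) < c ^ (n / 2 + 1 : ℝ) := Real.rpow_pos_of_pos hc0 _
  have hda : HasDerivAt (fun x : ℝ => x ^ (n / 2 : ℝ)) (n / 2 * c ^ (n / 2 - 1 : ℝ)) c :=
    Real.hasDerivAt_rpow_const (Or.inl hc0.ne')
  have hdb : HasDerivAt (fun x : ℝ => x ^ (n / 2 + 1 : ℝ)) ((n / 2 + 1) * c ^ (n / 2 + 1 - 1 : ℝ)) c :=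
    Real.hasDerivAt_rpow_const (Or.inl hc0.ne')
  have h := ((hV c hc).div hda ha.ne').sub ((hR c hc).div hdb hb.ne')
  convert h using 1
  all_goals try rfl
  have e1 : c ^ (n / 2 - 1 : ℝ) = c ^ (n / 2 : ℝ) / c := by
    rw [Real.rpow_sub hc0, Real.rpow_one]
  have e2 : c ^ (n / 2 + 1 : ℝ) = c ^ (n / 2 : ℝ) * c := by
    rw [Real.rpow_add hc0, Real.rpow_one]
  have e3 : c ^ (n / 2 + 1 - 1 : ℝ) = c ^ (n / 2 : ℝ) := by norm_num
  rw [e1, e2, e3]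
  have hode' := hode c hc
  have hR' : R' c = c * V' c - (n / 2 * V c - R c) := by linarith
  rw [hR']
  field_simp
  ring
end

section
/- Let n ≥ 1 and let V, R : [n+2, ∞) → ℝ be differentiable with V(c) > 0, 0 < R(c) ≤ (n/2)·V(c), satisfying (n/2)·V(c) − R(c) = c·V'(c) − R'(c). Define P(c) = V(c)/c^(n/2) − R(c)/c^(n/2+1) and N(c) = R(c)/(c·V(c)). Then lim_{c→∞} P(c) exists and is finite, and this limit is positive if and only if ∫_{n+2}^∞ N(c) dc < ∞. -/
open Real Filter MeasureTheory

theorem stmt_5 (n : ℝ) (hn : 1 ≤ n) (V R V' R' : ℝ → ℝ)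
    (hV : ∀ c ≥ n + 2, HasDerivAt V (V' c) c)
    (hR : ∀ c ≥ n + 2, HasDerivAt R (R' c) c)
    (hVpos : ∀ c ≥ n + 2, 0 < V c)
    (hRpos : ∀ c ≥ n + 2, 0 < R c)
    (hRle : ∀ c ≥ n + 2, R c ≤ n / 2 * V c)
    (hode : ∀ c ≥ n + 2, n / 2 * V c - R c = c * V' c - R' c) :
    ∃ L : ℝ, Tendsto (fun c : ℝ => V c / c ^ (n / 2 : ℝ) - R c / c ^ (n / 2 + 1 : ℝ))
        atTop (nhds L) ∧
      (0 < L ↔ IntegrableOn (fun c => R c / (c * V c)) (Set.Ioi (n + 2))) := by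
  set a : ℝ := n + 2 with ha
  set q : ℝ := n / 2 + 1 with hq
  set N : ℝ → ℝ := fun c => R c / (c * V c) with hN
  have ha3 : (3:ℝ) ≤ a := by rw [ha]; linarith
  have hc0 : ∀ c : ℝ, a ≤ c → (0:ℝ) < c := fun c hc => by linarith
  have hcq : ∀ c : ℝ, a ≤ c → q < c := fun c hc => by rw [hq] at *; rw [ha] at hc; linarith
  have hWpos : ∀ c ≥ a, 0 < c * V c - R c := by
    intro c hc
    have h1 := hRle c hc
    have h2 := hVpos c hc
    nlinarith [mul_pos (show (0:ℝ) < c - n / 2 by rw [ha] at hc; linarith) h2]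
  set P : ℝ → ℝ := fun c => (c * V c - R c) / c ^ q with hP
  set f : ℝ → ℝ := fun c => R c * (c - q) / (c * (c * V c - R c)) with hf
  clear_value q N P f
  have hPpos : ∀ c ≥ a, 0 < P c := by
    intro c hc
    simp only [hP]
    exact div_pos (hWpos c hc) (rpow_pos_of_pos (hc0 c hc) q)
  -- derivative of P
  have hderiv : ∀ c ≥ a, HasDerivAt P (-(f c) * P c) c := by
    intro c hc
    have hcpos := hc0 c hc
    have hW : HasDerivAt (fun x => x * V x - R x) (q * V c - R c) c := by
      have h1 : HasDerivAt (fun x => x * V x - R x) (1 * V c + c * V' c - R' c) c :=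
        ((hasDerivAt_id c).mul (hV c hc)).sub (hR c hc)
      have h2 := hode c hc
      convert h1 using 1
      rw [hq]; linarith
    have hpow : HasDerivAt (fun x : ℝ => x ^ q) (q * c ^ (q - 1)) c :=
      Real.hasDerivAt_rpow_const (Or.inl hcpos.ne')
    have hne : c ^ q ≠ 0 := (rpow_pos_of_pos hcpos q).ne'
    have hD := hW.div hpow hne
    have hWne := (hWpos c hc).ne'
    convert hD using 1
    any_goals rfl
    case e'_8 => rw [hP]; rfl
    simp only [hf, hP]
    rw [Real.rpow_sub_one hcpos.ne' q]
    field_simp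
    ring
  have hlog : ∀ c ≥ a, HasDerivAt (fun x => Real.log (P x)) (-(f c)) c := by
    intro c hc
    have h := (hderiv c hc).log (hPpos c hc).ne'
    have he : -(f c) * P c / P c = -(f c) := by
      rw [mul_div_assoc, div_self (hPpos c hc).ne', mul_one]
    rwa [he] at h
  -- continuity facts
  have hVcont : ContinuousOn V (Set.Ici a) := fun c hc => (hV c hc).continuousAt.continuousWithinAt
  have hRcont : ContinuousOn R (Set.Ici a) := fun c hc => (hR c hc).continuousAt.continuousWithinAt
  have hfcont : ContinuousOn f (Set.Ici a) := by
    rw [hf]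
    apply ContinuousOn.div
    · exact hRcont.mul ((continuous_id.sub continuous_const).continuousOn)
    · exact continuous_id.continuousOn.mul
        ((continuous_id.continuousOn.mul hVcont).sub hRcont)
    · intro c hc
      exact (mul_pos (hc0 c hc) (hWpos c hc)).ne'
  have hNcont : ContinuousOn N (Set.Ici a) := by
    rw [hN]
    apply ContinuousOn.div hRcont (continuous_id.continuousOn.mul hVcont)
    intro c hc
    exact (mul_pos (hc0 c hc) (hVpos c hc)).ne'
  -- pointwise bounds
  have hf_nonneg : ∀ c ≥ a, 0 ≤ f c := by
    intro c hc
    rw [hf]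
    exact le_of_lt (div_pos (mul_pos (hRpos c hc) (by linarith [hcq c hc]))
      (mul_pos (hc0 c hc) (hWpos c hc)))
  have hN_nonneg : ∀ c ≥ a, 0 ≤ N c := by
    intro c hc
    rw [hN]
    exact le_of_lt (div_pos (hRpos c hc) (mul_pos (hc0 c hc) (hVpos c hc)))
  have hfN : ∀ c ≥ a, f c ≤ 2 * N c := by
    intro c hc
    have hcpos := hc0 c hc
    have h1 : 2 * R c ≤ (c + q) * V c := by
      have := hRle c hc
      nlinarith [mul_nonneg (show (0:ℝ) ≤ c + q - n by rw [hq]; rw [ha] at hc; linarith)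
        (hVpos c hc).le]
    rw [hf, hN]
    rw [show (2 : ℝ) * (R c / (c * V c)) = 2 * R c / (c * V c) by ring]
    rw [div_le_div_iff₀ (mul_pos hcpos (hWpos c hc)) (mul_pos hcpos (hVpos c hc))]
    nlinarith [mul_le_mul_of_nonneg_left h1 (mul_pos hcpos (hRpos c hc)).le]
  have hNf : ∀ c ≥ a, N c ≤ 2 * f c := by
    intro c hc
    have hcpos := hc0 c hc
    have h2 : 0 ≤ (c - 2 * q) * V c + R c := by
      have h3 : (0:ℝ) ≤ c - 2 * q := by rw [hq]; rw [ha] at hc; linarith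
      nlinarith [mul_nonneg h3 (hVpos c hc).le, (hRpos c hc).le]
    rw [hf, hN]
    rw [show (2 : ℝ) * (R c * (c - q) / (c * (c * V c - R c)))
        = 2 * (R c * (c - q)) / (c * (c * V c - R c)) by ring]
    rw [div_le_div_iff₀ (mul_pos hcpos (hVpos c hc)) (mul_pos hcpos (hWpos c hc))]
    nlinarith [mul_nonneg (mul_pos hcpos (hRpos c hc)).le h2]
  -- interval integrability of f
  have hfint : ∀ c₁ c₂ : ℝ, a ≤ c₁ → c₁ ≤ c₂ → IntervalIntegrable f volume c₁ c₂ := by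
    intro c₁ c₂ h1 h2
    apply ContinuousOn.intervalIntegrable
    apply hfcont.mono
    rw [Set.uIcc_of_le h2]
    intro x hx
    exact le_trans h1 hx.1
  have hNint : ∀ c₁ c₂ : ℝ, a ≤ c₁ → c₁ ≤ c₂ → IntervalIntegrable N volume c₁ c₂ := by
    intro c₁ c₂ h1 h2
    apply ContinuousOn.intervalIntegrable
    apply hNcont.mono
    rw [Set.uIcc_of_le h2]
    intro x hx
    exact le_trans h1 hx.1
  set F : ℝ → ℝ := fun c => ∫ x in a..c, f x with hF
  clear_value F
  have hPF : ∀ c ≥ a, P c = P a * Real.exp (-(F c)) := by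
    intro c hc
    have hftc : ∫ x in a..c, -f x = Real.log (P c) - Real.log (P a) := by
      apply intervalIntegral.integral_eq_sub_of_hasDerivAt
      · intro x hx
        rw [Set.uIcc_of_le hc] at hx
        exact hlog x hx.1
      · exact (hfint a c le_rfl hc).neg
    rw [intervalIntegral.integral_neg] at hftc
    have h3 : Real.log (P c) = Real.log (P a) - F c := by
      rw [hF]; simp only; linarith [hftc]
    calc P c = Real.exp (Real.log (P c)) := (Real.exp_log (hPpos c hc)).symm
    _ = Real.exp (Real.log (P a) + -(F c)) := by rw [h3]; ring_nf
    _ = P a * Real.exp (-(F c)) := by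
        rw [Real.exp_add, Real.exp_log (hPpos a le_rfl)]
  have hFmono : ∀ c₁ c₂ : ℝ, a ≤ c₁ → c₁ ≤ c₂ → F c₁ ≤ F c₂ := by
    intro c₁ c₂ h1 h2
    have hsplit : F c₂ - F c₁ = ∫ x in c₁..c₂, f x := by
      rw [hF]
      simp only
      rw [← intervalIntegral.integral_add_adjacent_intervals (hfint a c₁ le_rfl h1)
        (hfint c₁ c₂ h1 h2)]
      ring
    have hnn : 0 ≤ ∫ x in c₁..c₂, f x :=
      intervalIntegral.integral_nonneg h2 (fun x hx => hf_nonneg x (le_trans h1 hx.1))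
    linarith
  have hstmt : ∀ c ≥ a, V c / c ^ (n / 2 : ℝ) - R c / c ^ q = P c := by
    intro c hc
    have hcpos := hc0 c hc
    have h1 : c ^ q = c ^ (n / 2 : ℝ) * c := by
      rw [hq]; exact Real.rpow_add_one hcpos.ne' _
    rw [hP]
    simp only
    rw [h1]
    have h2 : (c : ℝ) ^ (n / 2 : ℝ) ≠ 0 := (rpow_pos_of_pos hcpos _).ne'
    field_simp
  by_cases hInt : IntegrableOn N (Set.Ioi a)
  · -- integrable case: positive limit
    have hfmeas : AEStronglyMeasurable f (volume.restrict (Set.Ioi a)) :=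
      (hfcont.mono Set.Ioi_subset_Ici_self).aestronglyMeasurable measurableSet_Ioi
    have hfint' : IntegrableOn f (Set.Ioi a) := by
      apply Integrable.mono (hInt.const_mul 2) hfmeas
      apply (ae_restrict_iff' measurableSet_Ioi).2 (ae_of_all _ ?_)
      intro x hx
      have hx' : a ≤ x := le_of_lt hx
      rw [Real.norm_eq_abs, Real.norm_eq_abs, abs_of_nonneg (hf_nonneg x hx'),
        abs_of_nonneg (mul_nonneg (by norm_num) (hN_nonneg x hx'))]
      exact hfN x hx'
    have hFI : Tendsto F atTop (nhds (∫ x in Set.Ioi a, f x)) := by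
      rw [hF]
      exact MeasureTheory.intervalIntegral_tendsto_integral_Ioi a hfint' tendsto_id
    refine ⟨P a * Real.exp (-(∫ x in Set.Ioi a, f x)), ?_, ?_⟩
    · apply Tendsto.congr' ?_ (((Real.continuous_exp.tendsto _).comp hFI.neg).const_mul (P a))
      filter_upwards [eventually_ge_atTop a] with c hc
      exact ((hstmt c hc).trans (hPF c hc)).symm
    · constructor
      · intro _; exact hInt
      · intro _; exact mul_pos (hPpos a le_rfl) (Real.exp_pos _)
  · -- non-integrable case: limit zero
    have hunb : ∀ M : ℝ, ∃ c, a ≤ c ∧ M ≤ F c := by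
      by_contra hcon
      push_neg at hcon
      obtain ⟨M, hM⟩ := hcon
      apply hInt
      apply MeasureTheory.integrableOn_Ioi_of_intervalIntegral_norm_bounded (2 * M) a
        (b := fun i : ℝ => i) (l := atTop) ?_ tendsto_id ?_
      · intro i
        by_cases hia : a ≤ i
        · apply IntegrableOn.mono_set ?_ Set.Ioc_subset_Icc_self
          apply ContinuousOn.integrableOn_Icc
          apply hNcont.mono
          intro x hx
          exact hx.1
        · rw [Set.Ioc_eq_empty (by simpa using fun h => hia (le_of_lt h))]
          exact integrableOn_empty
      · filter_upwards [eventually_ge_atTop a] with i hi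
        have h1 : ∫ x in a..i, ‖N x‖ = ∫ x in a..i, N x := by
          apply intervalIntegral.integral_congr
          intro x hx
          rw [Set.uIcc_of_le hi] at hx
          exact Real.norm_of_nonneg (hN_nonneg x hx.1)
        have h2 : ∫ x in a..i, N x ≤ ∫ x in a..i, (2 : ℝ) * f x := by
          apply intervalIntegral.integral_mono_on hi (hNint a i le_rfl hi)
            ((hfint a i le_rfl hi).const_mul 2)
          intro x hx
          exact hNf x hx.1
        have h3 : ∫ x in a..i, (2 : ℝ) * f x = 2 * F i := by
          rw [hF]
          simp only
          rw [intervalIntegral.integral_const_mul]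
        have h4 := hM i hi
        rw [h1]
        rw [h3] at h2
        linarith
    have hFtop : Tendsto F atTop atTop := by
      rw [tendsto_atTop]
      intro M
      obtain ⟨c₀, hc₀a, hc₀⟩ := hunb M
      filter_upwards [eventually_ge_atTop c₀] with c hc
      exact le_trans hc₀ (hFmono c₀ c hc₀a hc)
    refine ⟨0, ?_, ?_⟩
    · have h1 : Tendsto (fun c => Real.exp (-(F c))) atTop (nhds 0) :=
        Real.tendsto_exp_atBot.comp (tendsto_neg_atTop_atBot.comp hFtop)
      have h2 := h1.const_mul (P a)
      rw [mul_zero] at h2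
      apply Tendsto.congr' ?_ h2
      filter_upwards [eventually_ge_atTop a] with c hc
      exact ((hstmt c hc).trans (hPF c hc)).symm
    · exact ⟨fun h => absurd h (lt_irrefl 0), fun h => absurd h hInt⟩
end

section
/- Let n ≥ 1 and suppose V, R : [n+2, ∞) → ℝ are differentiable, V(c) > 0, 0 ≤ R(c) ≤ (n/2)·V(c), and (n/2)·V(c) − R(c) = c·V'(c) − R'(c). If ∫_{n+2}^∞ R(c)/(c·V(c)) dc = ∞, then lim_{c→∞} V(c)/c^(n/2) = 0. -/
open Real Filter MeasureTheory

lemma stmt_6_alg (m c u v r v' r' : ℝ) (hc : c ≠ 0) (hu : u ≠ 0)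
    (hode : m * v - r = c * v' - r') :
    -(r / (u * c)) * (1 - (m + 1) / c) =
      (v' * u - v * (m * (u / c))) / u ^ 2 -
        (r' * (u * c) - r * (m * (u / c) * c + u * 1)) / (u * c) ^ 2 := by
  field_simp
  linear_combination c * hode

theorem stmt_6 (n : ℝ) (hn : 1 ≤ n) (V R V' R' : ℝ → ℝ)
    (hV : ∀ c ≥ n + 2, HasDerivAt V (V' c) c)
    (hR : ∀ c ≥ n + 2, HasDerivAt R (R' c) c)
    (hVpos : ∀ c ≥ n + 2, 0 < V c)
    (hRnonneg : ∀ c ≥ n + 2, 0 ≤ R c)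
    (hRle : ∀ c ≥ n + 2, R c ≤ n / 2 * V c)
    (hode : ∀ c ≥ n + 2, n / 2 * V c - R c = c * V' c - R' c)
    (hdiv : ¬ IntegrableOn (fun c => R c / (c * V c)) (Set.Ioi (n + 2))) :
    Tendsto (fun c : ℝ => V c / c ^ (n / 2 : ℝ)) atTop (nhds 0) := by
  set a : ℝ := n + 2 with ha
  have ha0 : (0:ℝ) < a := by simp only [ha]; linarith
  set m : ℝ := n / 2 with hm
  have hm0 : (0:ℝ) < m := by simp only [hm]; linarith
  have haem : a = 2 * (m + 1) := by simp only [ha, hm]; ring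
  set P : ℝ → ℝ := fun c => V c / c ^ m - R c / (c ^ m * c) with hP
  set P' : ℝ → ℝ := fun c => -(R c / (c ^ m * c)) * (1 - (m + 1) / c) with hP'
  -- derivative of P
  have hPderiv : ∀ c ≥ a, HasDerivAt P (P' c) c := by
    intro c hc
    have hc0 : (0:ℝ) < c := lt_of_lt_of_le ha0 hc
    have hcm : (0:ℝ) < c ^ m := Real.rpow_pos_of_pos hc0 m
    have hrpow : HasDerivAt (fun x : ℝ => x ^ m) (m * c ^ (m - 1)) c :=
      Real.hasDerivAt_rpow_const (Or.inl hc0.ne')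
    have h1 : HasDerivAt (fun x => V x / x ^ m)
        ((V' c * c ^ m - V c * (m * c ^ (m - 1))) / (c ^ m) ^ 2) c :=
      (hV c hc).div hrpow hcm.ne'
    have h2 : HasDerivAt (fun x : ℝ => x ^ m * x) (m * c ^ (m - 1) * c + c ^ m * 1) c :=
      hrpow.mul (hasDerivAt_id c)
    have h3 : HasDerivAt (fun x => R x / (x ^ m * x))
        ((R' c * (c ^ m * c) - R c * (m * c ^ (m - 1) * c + c ^ m * 1)) / (c ^ m * c) ^ 2) c :=
      (hR c hc).div h2 (by positivity)
    have h4 := h1.sub h3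
    refine HasDerivAt.congr_deriv h4 ?_
    have hsub : c ^ (m - 1) = c ^ m / c := by
      rw [Real.rpow_sub hc0, Real.rpow_one]
    rw [hsub]
    exact (stmt_6_alg m c (c ^ m) (V c) (R c) (V' c) (R' c) hc0.ne' hcm.ne' (hode c hc)).symm
  -- lower bound for P
  have hPge : ∀ c ≥ a, V c / c ^ m / 2 ≤ P c := by
    intro c hc
    have hc0 : (0:ℝ) < c := lt_of_lt_of_le ha0 hc
    have hcm : (0:ℝ) < c ^ m := Real.rpow_pos_of_pos hc0 m
    have h1 : R c / (c ^ m * c) ≤ V c / c ^ m / 2 := by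
      rw [div_div, div_le_div_iff₀ (by positivity) (by positivity)]
      have hr := hRle c hc
      have hv := (hVpos c hc).le
      have hc2m : 2 * m ≤ c := by
        have : 2 * m ≤ a := by rw [haem]; linarith
        linarith
      nlinarith [mul_le_mul_of_nonneg_right hr (le_of_lt hcm),
        mul_nonneg (mul_nonneg (sub_nonneg.2 hc2m) hv) hcm.le]
    simp only [hP]
    linarith
  have hPposQ : ∀ c ≥ a, 0 < V c / c ^ m := by
    intro c hc
    have hc0 : (0:ℝ) < c := lt_of_lt_of_le ha0 hc
    exact div_pos (hVpos c hc) (Real.rpow_pos_of_pos hc0 m)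
  have hPpos : ∀ c ≥ a, 0 < P c := fun c hc =>
    lt_of_lt_of_le (by linarith [hPposQ c hc]) (hPge c hc)
  -- P' is nonpositive on [a, ∞)
  have hP'nonpos : ∀ c ≥ a, P' c ≤ 0 := by
    intro c hc
    have hc0 : (0:ℝ) < c := lt_of_lt_of_le ha0 hc
    have hcm : (0:ℝ) < c ^ m := Real.rpow_pos_of_pos hc0 m
    have h1 : 0 ≤ R c / (c ^ m * c) := div_nonneg (hRnonneg c hc) (by positivity)
    have h2 : (m + 1) / c ≤ 1 := by
      rw [div_le_one hc0]; rw [haem] at hc; linarith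
    simp only [hP']
    exact mul_nonpos_of_nonpos_of_nonneg (by linarith) (by linarith)
  -- P is antitone on [a, ∞)
  have hPanti : AntitoneOn P (Set.Ici a) := by
    apply antitoneOn_of_deriv_nonpos (convex_Ici a)
    · exact fun c hc => (hPderiv c hc).continuousAt.continuousWithinAt
    · intro x hx
      rw [interior_Ici] at hx
      exact ((hPderiv x hx.le).differentiableAt).differentiableWithinAt
    · intro x hx
      rw [interior_Ici] at hx
      rw [(hPderiv x hx.le).deriv]
      exact hP'nonpos x hx.le
  -- modified P, antitone everywhere
  set Pt : ℝ → ℝ := fun c => P (max c a) with hPt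
  have hPtanti : Antitone Pt := by
    intro x y hxy
    exact hPanti (le_max_right x a) (le_max_right y a) (max_le_max hxy le_rfl)
  have hPtpos : ∀ c, 0 < Pt c := fun c => hPpos _ (le_max_right c a)
  have hbdd : BddBelow (Set.range Pt) := ⟨0, by rintro _ ⟨c, rfl⟩; exact (hPtpos c).le⟩
  set L : ℝ := ⨅ c, Pt c with hL
  have hPttend : Tendsto Pt atTop (nhds L) := tendsto_atTop_ciInf hPtanti hbdd
  have hL0 : 0 ≤ L := le_ciInf fun c => (hPtpos c).le
  have hLle : ∀ c ≥ a, L ≤ P c := by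
    intro c hc
    have h := ciInf_le hbdd c
    rwa [show Pt c = P c by simp only [hPt, max_eq_left hc]] at h
  have hPtend : Tendsto P atTop (nhds L) := by
    apply hPttend.congr'
    filter_upwards [Filter.eventually_ge_atTop a] with c hc
    simp only [hPt, max_eq_left hc]
  -- L = 0
  have hLz : L = 0 := by
    by_contra hne
    have hLpos : 0 < L := lt_of_le_of_ne hL0 (Ne.symm hne)
    -- -P' is integrable on (a, ∞)
    have hint : IntegrableOn (fun c => -P' c) (Set.Ioi a) := by
      apply integrableOn_Ioi_deriv_of_nonneg' (g := fun c => -P c)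
        (fun x hx => (hPderiv x hx).neg)
        (fun x hx => by simpa using hP'nonpos x (le_of_lt hx))
      exact hPtend.neg
    -- pointwise bound
    have hkey : ∀ c ∈ Set.Ioi a, R c / (c * V c) ≤ 2 / L * (-P' c) := by
      intro c hc
      have hca : a ≤ c := le_of_lt hc
      have hc0 : (0:ℝ) < c := lt_of_lt_of_le ha0 hca
      have hcm : (0:ℝ) < c ^ m := Real.rpow_pos_of_pos hc0 m
      have hVc := hVpos c hca
      set N : ℝ := R c / (c * V c) with hN
      have hNn : 0 ≤ N := div_nonneg (hRnonneg c hca) (by positivity)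
      have h6 : R c / (c ^ m * c) = N * (V c / c ^ m) := by
        simp only [hN]; field_simp
      have hVu : L ≤ V c / c ^ m := by
        have h1 := hLle c hca
        have h2 : P c ≤ V c / c ^ m := by
          have : 0 ≤ R c / (c ^ m * c) := div_nonneg (hRnonneg c hca) (by positivity)
          simp only [hP]; linarith
        exact h1.trans h2
      have hfac : 1 / 2 ≤ 1 - (m + 1) / c := by
        have : (m + 1) / c ≤ 1 / 2 := by
          rw [div_le_div_iff₀ hc0 (by norm_num)]
          rw [haem] at hca; linarith
        linarith
      have h7 : N * L * (1 / 2) ≤ -P' c := by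
        have heq : -P' c = (N * (V c / c ^ m)) * (1 - (m + 1) / c) := by
          simp only [hP', h6]; ring
        rw [heq]
        have hb1 : N * L ≤ N * (V c / c ^ m) := mul_le_mul_of_nonneg_left hVu hNn
        have hb2 : 0 ≤ N * (V c / c ^ m) := mul_nonneg hNn (div_pos hVc hcm).le
        calc N * L * (1 / 2) ≤ N * (V c / c ^ m) * (1 / 2) := by linarith
          _ ≤ N * (V c / c ^ m) * (1 - (m + 1) / c) :=
              mul_le_mul_of_nonneg_left hfac hb2
      calc N = (N * L * (1 / 2)) * (2 / L) := by field_simp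
        _ ≤ (-P' c) * (2 / L) := mul_le_mul_of_nonneg_right h7 (by positivity)
        _ = 2 / L * (-P' c) := by ring
    -- measurability of N
    have hNcont : ContinuousOn (fun c => R c / (c * V c)) (Set.Ioi a) := by
      apply ContinuousOn.div
      · exact fun c hc => (hR c (le_of_lt hc)).continuousAt.continuousWithinAt
      · exact continuousOn_id.mul
          (fun c hc => (hV c (le_of_lt hc)).continuousAt.continuousWithinAt)
      · intro c hc
        have hc0 : (0:ℝ) < c := lt_of_lt_of_le ha0 (le_of_lt hc)
        exact ne_of_gt (mul_pos hc0 (hVpos c (le_of_lt hc)))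
    have hNint : IntegrableOn (fun c => R c / (c * V c)) (Set.Ioi a) := by
      apply Integrable.mono' (hint.const_mul (2 / L))
      · exact hNcont.aestronglyMeasurable measurableSet_Ioi
      · filter_upwards [ae_restrict_mem measurableSet_Ioi] with c hc
        rw [Real.norm_eq_abs, abs_of_nonneg
          (div_nonneg (hRnonneg c (le_of_lt hc))
            (mul_nonneg (lt_of_lt_of_le ha0 (le_of_lt hc)).le
              (hVpos c (le_of_lt hc)).le))]
        exact hkey c hc
    exact hdiv hNint
  rw [hLz] at hPtend
  -- squeeze
  apply squeeze_zero' (f := fun c => V c / c ^ m) (g := fun c => 2 * P c)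
  · filter_upwards [Filter.eventually_ge_atTop a] with c hc
    exact (hPposQ c hc).le
  · filter_upwards [Filter.eventually_ge_atTop a] with c hc
    linarith [hPge c hc]
  · simpa using hPtend.const_mul 2
end

section
/- Let n ≥ 1 and suppose V, R : [n+2, ∞) → ℝ are differentiable, V(c) > 0, 0 ≤ R(c) ≤ (n/2)·V(c), and (n/2)·V(c) − R(c) = c·V'(c) − R'(c). If ∫_{n+2}^∞ R(c)/(c·V(c)) dc < ∞, then lim_{c→∞} V(c)/c^(n/2) exists and is strictly positive; in fact V(c)/c^(n/2) ≥ P(n+2)·exp(−2∫_{n+2}^∞ R(t)/(t·V(t)) dt) for all large c, where P(c) = V(c)/c^(n/2) − R(c)/c^(n/2+1). -/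
open Real Filter MeasureTheory

private lemma stmt7_aux_deriv (n : ℝ) (V R V' R' : ℝ → ℝ) (c : ℝ) (hc0 : 0 < c)
    (hVc : HasDerivAt V (V' c) c) (hRc : HasDerivAt R (R' c) c)
    (hode' : n / 2 * V c - R c = c * V' c - R' c) :
    HasDerivAt (fun c => V c / c ^ (n/2 : ℝ) - R c / c ^ (n/2 + 1 : ℝ))
      (R c * (n/2 + 1 - c) / (c ^ (n/2 : ℝ) * c ^ 2)) c := by
  have hx : HasDerivAt (fun y : ℝ => y ^ (n/2:ℝ)) (n/2 * c ^ (n/2 - 1:ℝ)) c :=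
    Real.hasDerivAt_rpow_const (Or.inl hc0.ne')
  have hx1 : HasDerivAt (fun y : ℝ => y ^ (n/2 + 1:ℝ)) ((n/2 + 1) * c ^ (n/2 + 1 - 1:ℝ)) c :=
    Real.hasDerivAt_rpow_const (Or.inl hc0.ne')
  have hxpos : (0:ℝ) < c ^ (n/2:ℝ) := Real.rpow_pos_of_pos hc0 _
  have hxne : c ^ (n/2:ℝ) ≠ 0 := hxpos.ne'
  have hx1ne : c ^ (n/2 + 1:ℝ) ≠ 0 := (Real.rpow_pos_of_pos hc0 _).ne'
  have h1 := (hVc.div hx hxne).sub (hRc.div hx1 hx1ne)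
  refine h1.congr_deriv ?_
  have hr1 : c ^ (n/2 + 1:ℝ) = c ^ (n/2:ℝ) * c := Real.rpow_add_one hc0.ne' _
  have hr2 : c ^ (n/2 - 1:ℝ) = c ^ (n/2:ℝ) / c := Real.rpow_sub_one hc0.ne' _
  have hr3 : (n/2 + 1 - 1:ℝ) = (n/2:ℝ) := by ring
  rw [hr3, hr1, hr2]
  field_simp
  linear_combination (-2 * c) * hode'

theorem stmt_7 (n : ℝ) (hn : 1 ≤ n) (V R V' R' : ℝ → ℝ)
    (hV : ∀ c ≥ n + 2, HasDerivAt V (V' c) c)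
    (hR : ∀ c ≥ n + 2, HasDerivAt R (R' c) c)
    (hVpos : ∀ c ≥ n + 2, 0 < V c)
    (hRnonneg : ∀ c ≥ n + 2, 0 ≤ R c)
    (hRle : ∀ c ≥ n + 2, R c ≤ n / 2 * V c)
    (hode : ∀ c ≥ n + 2, n / 2 * V c - R c = c * V' c - R' c)
    (hconv : IntegrableOn (fun c => R c / (c * V c)) (Set.Ioi (n + 2))) :
    (∃ L : ℝ, Tendsto (fun c : ℝ => V c / c ^ (n / 2 : ℝ)) atTop (nhds L) ∧ 0 < L) ∧
    (∀ᶠ c in atTop,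
      (V (n + 2) / (n + 2) ^ (n / 2 : ℝ) - R (n + 2) / (n + 2) ^ (n / 2 + 1 : ℝ)) *
          Real.exp (-2 * ∫ t in Set.Ioi (n + 2), R t / (t * V t)) ≤
        V c / c ^ (n / 2 : ℝ)) := by
  have hapos : (0:ℝ) < n + 2 := by linarith
  set a : ℝ := n + 2 with ha
  set N : ℝ → ℝ := fun t => R t / (t * V t) with hNdef
  set P : ℝ → ℝ := fun c => V c / c ^ (n/2 : ℝ) - R c / c ^ (n/2 + 1 : ℝ) with hPdef
  set P' : ℝ → ℝ := fun c => R c * (n/2 + 1 - c) / (c ^ (n/2 : ℝ) * c ^ 2) with hP'def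
  have hPderiv : ∀ c ≥ a, HasDerivAt P (P' c) c := fun c hc =>
    stmt7_aux_deriv n V R V' R' c (by linarith) (hV c hc) (hR c hc) (hode c hc)
  have hPeq : ∀ c : ℝ, 0 < c → P c = (V c * c - R c) / (c ^ (n/2:ℝ) * c) := by
    intro c hc0
    have hr1 : c ^ (n/2 + 1:ℝ) = c ^ (n/2:ℝ) * c := Real.rpow_add_one hc0.ne' _
    have hxne : c ^ (n/2:ℝ) ≠ 0 := (Real.rpow_pos_of_pos hc0 _).ne'
    simp only [hPdef, hr1]
    field_simp
  have hPge : ∀ c ≥ a, V c / c ^ (n/2:ℝ) / 2 ≤ P c := by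
    intro c hc
    have hc0 : (0:ℝ) < c := by linarith
    have hxpos : (0:ℝ) < c ^ (n/2:ℝ) := Real.rpow_pos_of_pos hc0 _
    rw [hPeq c hc0, div_div, div_le_div_iff₀ (by positivity) (by positivity)]
    have h1 := hRle c hc
    have h2 := hVpos c hc
    nlinarith [mul_pos hxpos hc0, mul_le_mul_of_nonneg_left h1 (le_of_lt hxpos),
      mul_pos h2 hxpos]
  have hPpos : ∀ c ≥ a, 0 < P c := by
    intro c hc
    have hc0 : (0:ℝ) < c := by linarith
    have h : 0 < V c / c ^ (n/2:ℝ) / 2 := by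
      have := hVpos c hc
      positivity
    exact lt_of_lt_of_le h (hPge c hc)
  have hPleV : ∀ c ≥ a, P c ≤ V c / c ^ (n/2:ℝ) := by
    intro c hc
    have hc0 : (0:ℝ) < c := by linarith
    have h : 0 ≤ R c / c ^ (n/2 + 1:ℝ) := by
      have := hRnonneg c hc
      positivity
    simp only [hPdef]
    linarith
  have hNnonneg : ∀ c ≥ a, 0 ≤ N c := by
    intro c hc
    have hc0 : (0:ℝ) < c := by linarith
    have := hRnonneg c hc
    have := hVpos c hc
    positivity
  have hNcont : ∀ c ≥ a, ContinuousAt N c := by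
    intro c hc
    have hc0 : (0:ℝ) < c := by linarith
    exact ((hR c hc).continuousAt).div
      (continuousAt_id.mul (hV c hc).continuousAt)
      (ne_of_gt (mul_pos hc0 (hVpos c hc)))
  set N0 : ℝ → ℝ := fun t => if a < t then N t else 0 with hN0def
  have hN0eq : Set.EqOn N0 N (Set.Ioi a) := fun t ht => if_pos ht
  have hN0int : Integrable N0 := by
    have h : N0 = (Set.Ioi a).indicator N := by
      funext t
      by_cases h : a < t <;> simp [hN0def, Set.indicator, h]
    rw [h, integrable_indicator_iff measurableSet_Ioi]
    exact hconv
  set F : ℝ → ℝ := fun c => ∫ t in a..c, N0 t with hFdef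
  have hFcont : Continuous F := hN0int.continuous_primitive a
  have hN0contOn : ContinuousOn N0 (Set.Ioi a) := by
    intro c hc
    have h : ContinuousAt N0 c := by
      refine (hNcont c (le_of_lt hc)).congr ?_
      filter_upwards [isOpen_Ioi.mem_nhds hc] with t ht
      exact (hN0eq ht).symm
    exact h.continuousWithinAt
  have hFderiv : ∀ c > a, HasDerivAt F (N c) c := by
    intro c hc
    have hcont : ContinuousAt N0 c := by
      refine (hNcont c (le_of_lt hc)).congr ?_
      filter_upwards [isOpen_Ioi.mem_nhds hc] with t ht
      exact (hN0eq ht).symm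
    have hii : IntervalIntegrable N0 volume a c := hN0int.intervalIntegrable
    have h := intervalIntegral.integral_hasDerivAt_right hii
      (hN0contOn.stronglyMeasurableAtFilter isOpen_Ioi c hc) hcont
    rw [show N c = N0 c from (hN0eq hc).symm]
    exact h
  have hFle : ∀ c ≥ a, F c ≤ ∫ t in Set.Ioi a, N t := by
    intro c hc
    rw [hFdef]
    simp only
    rw [intervalIntegral.integral_of_le hc,
      setIntegral_congr_fun measurableSet_Ioc
        (fun t ht => hN0eq (Set.Ioc_subset_Ioi_self ht))]
    refine setIntegral_mono_set hconv ?_ ?_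
    · rw [EventuallyLE, ae_restrict_iff' measurableSet_Ioi]
      exact ae_of_all _ fun t ht => hNnonneg t (le_of_lt ht)
    · exact HasSubset.Subset.eventuallyLE Set.Ioc_subset_Ioi_self
  set G : ℝ → ℝ := fun c => P c * Real.exp (2 * F c) with hGdef
  have hGderiv : ∀ c > a, HasDerivAt G ((P' c + 2 * N c * P c) * Real.exp (2 * F c)) c := by
    intro c hc
    have h2F : HasDerivAt (fun c => 2 * F c) (2 * N c) c := (hFderiv c hc).const_mul 2
    have hexp := h2F.exp
    have h := (hPderiv c (le_of_lt hc)).mul hexp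
    refine h.congr_deriv ?_
    ring
  have hsum : ∀ c ≥ a, 0 ≤ P' c + 2 * N c * P c := by
    intro c hc
    have hc0 : (0:ℝ) < c := by linarith
    have hxpos : (0:ℝ) < c ^ (n/2:ℝ) := Real.rpow_pos_of_pos hc0 _
    have hRn := hRnonneg c hc
    have hVp := hVpos c hc
    have h1 : -(R c / (c ^ (n/2:ℝ) * c)) ≤ P' c := by
      rw [hP'def]
      simp only
      rw [neg_le, ← neg_div, div_le_div_iff₀ (by positivity) (by positivity)]
      nlinarith [mul_nonneg (mul_nonneg hRn (mul_nonneg hxpos.le hc0.le))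
        (by linarith : (0:ℝ) ≤ n/2 + 1)]
    have h2 : R c / (c ^ (n/2:ℝ) * c) ≤ 2 * N c * P c := by
      have hNP : 2 * N c * (V c / c ^ (n/2:ℝ) / 2) ≤ 2 * N c * P c := by
        apply mul_le_mul_of_nonneg_left (hPge c hc)
        have := hNnonneg c hc
        linarith
      have heq : 2 * N c * (V c / c ^ (n/2:ℝ) / 2) = R c / (c ^ (n/2:ℝ) * c) := by
        rw [hNdef]
        field_simp
      linarith
    clear_value P P' N
    linarith [h1, h2]
  have hGmono : MonotoneOn G (Set.Ici a) := by
    apply monotoneOn_of_deriv_nonneg (convex_Ici a)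
    · apply ContinuousOn.mul
      · intro c hc
        exact ((hPderiv c hc).continuousAt).continuousWithinAt
      · exact (Real.continuous_exp.comp (continuous_const.mul hFcont)).continuousOn
    · intro c hc
      rw [interior_Ici] at hc
      exact (hGderiv c hc).differentiableAt.differentiableWithinAt
    · intro c hc
      rw [interior_Ici] at hc
      rw [(hGderiv c hc).deriv]
      exact mul_nonneg (hsum c (le_of_lt hc)) (Real.exp_nonneg _)
  have hPanti : AntitoneOn P (Set.Ici a) := by
    apply antitoneOn_of_deriv_nonpos (convex_Ici a)
    · intro c hc
      exact ((hPderiv c hc).continuousAt).continuousWithinAt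
    · intro c hc
      rw [interior_Ici] at hc
      exact (hPderiv c (le_of_lt hc)).differentiableAt.differentiableWithinAt
    · intro c hc
      rw [interior_Ici] at hc
      rw [(hPderiv c (le_of_lt hc)).deriv]
      rw [hP'def]
      simp only
      apply div_nonpos_of_nonpos_of_nonneg
      · have hcc := Set.mem_Ioi.mp hc
        refine mul_nonpos_iff.mpr (Or.inl ⟨hRnonneg c (le_of_lt hc), ?_⟩)
        linarith
      · have hc0 : (0:ℝ) < c := lt_trans hapos (Set.mem_Ioi.mp hc)
        positivity
  set K : ℝ := P a * Real.exp (-2 * ∫ t in Set.Ioi a, N t) with hKdef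
  have hFa : F a = 0 := intervalIntegral.integral_same
  have hKle : ∀ c ≥ a, K ≤ P c := by
    intro c hc
    have hGa : G a = P a := by rw [hGdef]; simp [hFa]
    have h1 : P a ≤ P c * Real.exp (2 * F c) := by
      have h := hGmono (Set.self_mem_Ici) hc hc
      rw [hGa] at h
      exact h
    have h2 : P a * Real.exp (-(2 * F c)) ≤ P c := by
      have h := mul_le_mul_of_nonneg_right h1 (Real.exp_nonneg (-(2 * F c)))
      rwa [mul_assoc, ← Real.exp_add, add_neg_cancel, Real.exp_zero, mul_one] at h
    refine le_trans ?_ h2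
    rw [hKdef]
    apply mul_le_mul_of_nonneg_left _ (le_of_lt (hPpos a le_rfl))
    apply Real.exp_le_exp.mpr
    have := hFle c hc
    linarith
  have hKpos : 0 < K := mul_pos (hPpos a le_rfl) (Real.exp_pos _)
  constructor
  · set Q : ℝ → ℝ := fun c => P (max c a) with hQdef
    have hQanti : Antitone Q := by
      intro c d hcd
      exact hPanti (le_max_right c a) (le_max_right d a) (max_le_max hcd le_rfl)
    have hQbdd : BddBelow (Set.range Q) := by
      refine ⟨K, ?_⟩
      rintro x ⟨c, rfl⟩
      exact hKle _ (le_max_right c a)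
    have hQtend := tendsto_atTop_ciInf hQanti hQbdd
    set L : ℝ := ⨅ c, Q c with hLdef
    have hLK : K ≤ L := le_ciInf fun c => hKle _ (le_max_right c a)
    have hPtend : Tendsto P atTop (nhds L) := by
      refine hQtend.congr' ?_
      filter_upwards [eventually_ge_atTop a] with c hc
      rw [hQdef]
      simp [max_eq_left hc]
    have hz : Tendsto (fun c => R c / c ^ (n/2 + 1:ℝ)) atTop (nhds 0) := by
      apply squeeze_zero' (g := fun c => n * P a / c)
      · filter_upwards [eventually_ge_atTop a] with c hc
        have hc0 : (0:ℝ) < c := by linarith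
        have := hRnonneg c hc
        positivity
      · filter_upwards [eventually_ge_atTop a] with c hc
        have hc0 : (0:ℝ) < c := by linarith
        have hxpos : (0:ℝ) < c ^ (n/2:ℝ) := Real.rpow_pos_of_pos hc0 _
        have hr1 : c ^ (n/2 + 1:ℝ) = c ^ (n/2:ℝ) * c := Real.rpow_add_one hc0.ne' _
        rw [hr1, ← div_div]
        have hab : R c / c ^ (n/2:ℝ) ≤ n * P a := by
          have h1 : R c / c ^ (n/2:ℝ) ≤ n/2 * V c / c ^ (n/2:ℝ) :=
            div_le_div_of_nonneg_right (hRle c hc) hxpos.le  -- may need rename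
          have h2 : V c / c ^ (n/2:ℝ) ≤ 2 * P c := by linarith [hPge c hc]
          have h3 : P c ≤ P a := hPanti Set.self_mem_Ici (Set.mem_Ici.mpr hc) hc
          have h4 : n/2 * V c / c ^ (n/2:ℝ) = n/2 * (V c / c ^ (n/2:ℝ)) := by ring
          have h5 : n/2 * (V c / c ^ (n/2:ℝ)) ≤ n/2 * (2 * P a) := by
            have h6 : V c / c ^ (n/2:ℝ) ≤ 2 * P a := by
              clear_value P
              linarith
            apply mul_le_mul_of_nonneg_left h6 (by linarith)
          calc R c / c ^ (n/2:ℝ) ≤ n/2 * (V c / c ^ (n/2:ℝ)) := by rw [← h4]; exact h1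
            _ ≤ n/2 * (2 * P a) := h5
            _ = n * P a := by ring
        exact div_le_div_of_nonneg_right hab hc0.le  -- may need rename
      · exact Tendsto.div_atTop tendsto_const_nhds tendsto_id
    have hVP : (fun c : ℝ => V c / c ^ (n/2:ℝ)) = fun c => P c + R c / c ^ (n/2 + 1:ℝ) := by
      funext c
      rw [hPdef]
      ring
    refine ⟨L, ?_, lt_of_lt_of_le hKpos hLK⟩
    rw [hVP]
    simpa using hPtend.add hz
  · filter_upwards [eventually_ge_atTop a] with c hc
    exact le_trans (hKle c hc) (hPleV c hc)
end

section
/- Let n ≥ 1 and let V, R : [n+2, ∞) → ℝ be differentiable with V > 0, 0 ≤ R ≤ (n/2)V, and (n/2)V(c) − R(c) = c·V'(c) − R'(c). Then the function P(c) = V(c)/c^(n/2) − R(c)/c^(n/2+1) is nonincreasing on [n+2, ∞), and hence V(c) ≤ C·c^(n/2) for some constant C and all c ≥ n+2. -/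
open Real

theorem stmt_8 (n : ℝ) (hn : 1 ≤ n) (V R V' R' : ℝ → ℝ)
    (hV : ∀ c ≥ n + 2, HasDerivAt V (V' c) c)
    (hR : ∀ c ≥ n + 2, HasDerivAt R (R' c) c)
    (hVpos : ∀ c ≥ n + 2, 0 < V c)
    (hRnonneg : ∀ c ≥ n + 2, 0 ≤ R c)
    (hRle : ∀ c ≥ n + 2, R c ≤ n / 2 * V c)
    (hode : ∀ c ≥ n + 2, n / 2 * V c - R c = c * V' c - R' c) :
    AntitoneOn (fun c : ℝ => V c / c ^ (n / 2 : ℝ) - R c / c ^ (n / 2 + 1 : ℝ))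
        (Set.Ici (n + 2)) ∧
      ∃ C : ℝ, ∀ c ≥ n + 2, V c ≤ C * c ^ (n / 2 : ℝ) := by
  set P : ℝ → ℝ := fun c => V c / c ^ (n / 2 : ℝ) - R c / c ^ (n / 2 + 1 : ℝ) with hP
  have hderiv : ∀ c ≥ n + 2, HasDerivAt P
      (R c * (n / 2 + 1 - c) / (c ^ (n / 2 : ℝ) * c ^ 2)) c := by
    intro c hc
    have hc0 : (0:ℝ) < c := by linarith
    have ha : (0:ℝ) < c ^ (n / 2 : ℝ) := rpow_pos_of_pos hc0 _
    have hb : (0:ℝ) < c ^ (n / 2 + 1 : ℝ) := rpow_pos_of_pos hc0 _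
    have h1 : HasDerivAt (fun x : ℝ => x ^ (n / 2 : ℝ)) (n / 2 * c ^ (n / 2 - 1 : ℝ)) c :=
      Real.hasDerivAt_rpow_const (Or.inl hc0.ne')
    have h2 : HasDerivAt (fun x : ℝ => x ^ (n / 2 + 1 : ℝ))
        ((n / 2 + 1) * c ^ (n / 2 + 1 - 1 : ℝ)) c :=
      Real.hasDerivAt_rpow_const (Or.inl hc0.ne')
    have hd := ((hV c hc).div h1 ha.ne').sub ((hR c hc).div h2 hb.ne')
    convert hd using 1 <;> try rfl
    have e1 : c ^ (n / 2 - 1 : ℝ) = c ^ (n / 2 : ℝ) / c := by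
      rw [rpow_sub hc0, rpow_one]
    have e2 : c ^ (n / 2 + 1 : ℝ) = c ^ (n / 2 : ℝ) * c := by
      rw [rpow_add hc0, rpow_one]
    have e3 : c ^ (n / 2 + 1 - 1 : ℝ) = c ^ (n / 2 : ℝ) := by norm_num
    have hR' : R' c = c * V' c - (n / 2 * V c - R c) := by linarith [hode c hc]
    rw [e1, e2, e3, hR']
    field_simp
    ring
  have hcont : ContinuousOn P (Set.Ici (n + 2)) := fun c hc =>
    ((hderiv c hc).continuousAt).continuousWithinAt
  have hanti : AntitoneOn P (Set.Ici (n + 2)) := by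
    apply antitoneOn_of_deriv_nonpos (convex_Ici _) hcont
    · intro x hx
      rw [interior_Ici] at hx
      exact ((hderiv x (le_of_lt hx)).differentiableAt).differentiableWithinAt
    · intro x hx
      rw [interior_Ici] at hx
      have hx' : x ≥ n + 2 := le_of_lt hx
      rw [(hderiv x hx').deriv]
      have hx0 : (0:ℝ) < x := by linarith
      have ha : (0:ℝ) < x ^ (n / 2 : ℝ) := rpow_pos_of_pos hx0 _
      apply div_nonpos_of_nonpos_of_nonneg
      · have := hRnonneg x hx'
        nlinarith
      · positivity
  refine ⟨hanti, ⟨2 * P (n + 2), ?_⟩⟩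
  intro c hc
  have hc0 : (0:ℝ) < c := by linarith
  have ha : (0:ℝ) < c ^ (n / 2 : ℝ) := rpow_pos_of_pos hc0 _
  have hb : c ^ (n / 2 + 1 : ℝ) = c ^ (n / 2 : ℝ) * c := by
    rw [rpow_add hc0, rpow_one]
  have hPle : P c ≤ P (n + 2) := hanti (Set.self_mem_Ici) hc hc
  have h1 : V c / c ^ (n / 2 : ℝ) - R c / (c ^ (n / 2 : ℝ) * c) ≤ P (n + 2) := by
    simpa [hP, hb] using hPle
  have hRc : R c ≤ n / 2 * V c := hRle c hc
  have hR0 : 0 ≤ R c := hRnonneg c hc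
  have hV0 : 0 < V c := hVpos c hc
  -- R c / (a * c) ≤ (1/2) * V c / a since n/(2c) ≤ 1/2
  have key : V c / c ^ (n / 2 : ℝ) ≤ 2 * P (n + 2) := by
    have hca : c ^ (n / 2 : ℝ) * c > 0 := by positivity
    have h2 : R c / (c ^ (n / 2 : ℝ) * c) ≤ (V c / c ^ (n / 2 : ℝ)) / 2 := by
      rw [div_le_div_iff₀ hca (by norm_num)]
      have hcn : n ≤ c := by linarith
      have hVa : 0 < V c / c ^ (n / 2 : ℝ) := by positivity
      have : R c * 2 ≤ n * V c := by linarith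
      calc R c * 2 ≤ n * V c := this
        _ = (V c / c ^ (n / 2 : ℝ)) * (c ^ (n / 2 : ℝ) * n) := by
            field_simp
        _ ≤ (V c / c ^ (n / 2 : ℝ)) * (c ^ (n / 2 : ℝ) * c) := by
            apply mul_le_mul_of_nonneg_left _ hVa.le
            exact mul_le_mul_of_nonneg_left hcn ha.le
    linarith
  calc V c = (V c / c ^ (n / 2 : ℝ)) * c ^ (n / 2 : ℝ) := by field_simp
    _ ≤ 2 * P (n + 2) * c ^ (n / 2 : ℝ) := mul_le_mul_of_nonneg_right key ha.le
end

section
/- Let n ≥ 1, a = n+2, and let N : [a, ∞) → ℝ be continuous with 0 ≤ N(c) ≤ n/(2c). Suppose P : [a, ∞) → (0, ∞) is differentiable and satisfies P'(c) = −(1 − (n+2)/(2c))·N(c)/(1 − N(c))·P(c). Then for all c ≥ a: P(a)·exp(−2∫_a^c N) ≤ P(c) ≤ P(a)·exp(−(1/2)∫_a^c N). -/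
open Real intervalIntegral

theorem stmt_15 (n : ℝ) (hn : 1 ≤ n) (N P : ℝ → ℝ)
    (hNcont : ContinuousOn N (Set.Ici (n + 2)))
    (hNnonneg : ∀ c ≥ n + 2, 0 ≤ N c)
    (hNle : ∀ c ≥ n + 2, N c ≤ n / (2 * c))
    (hPpos : ∀ c ≥ n + 2, 0 < P c)
    (hP : ∀ c ≥ n + 2,
      HasDerivAt P (-(1 - (n + 2) / (2 * c)) * N c / (1 - N c) * P c) c) :
    ∀ c ≥ n + 2,
      P (n + 2) * Real.exp (-2 * ∫ t in (n + 2)..c, N t) ≤ P c ∧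
      P c ≤ P (n + 2) * Real.exp (-(1 / 2) * ∫ t in (n + 2)..c, N t) := by
  intro c hc
  set a := n + 2 with ha
  have hapos : (0:ℝ) < a := by simp only [ha]; linarith
  set g : ℝ → ℝ := fun t => -(1 - (n + 2) / (2 * t)) * N t / (1 - N t) with hg
  -- pointwise facts
  have facts : ∀ t ∈ Set.Ici a, N t ≤ 1/2 ∧ (1:ℝ)/2 ≤ 1 - (n+2)/(2*t) ∧ 0 ≤ (n+2)/(2*t) := by
    intro t ht
    have ht' : a ≤ t := ht
    have htpos : 0 < t := lt_of_lt_of_le hapos ht'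
    have h1 : N t ≤ n / (2 * t) := hNle t ht'
    have h2 : n / (2 * t) ≤ 1/2 := by
      rw [div_le_iff₀ (by linarith)]; simp only [ha] at ht'; linarith
    have h3 : (n+2)/(2*t) ≤ 1/2 := by
      rw [div_le_iff₀ (by linarith)]; simp only [ha] at ht'; linarith
    have h4 : 0 ≤ (n+2)/(2*t) := by positivity
    exact ⟨le_trans h1 h2, by linarith, h4⟩
  have hlow : ∀ t ∈ Set.Ici a, -2 * N t ≤ g t := by
    intro t ht
    obtain ⟨h1, h2, h3⟩ := facts t ht
    have hN0 : 0 ≤ N t := hNnonneg t ht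
    have hd : (0:ℝ) < 1 - N t := by linarith
    show -2 * N t ≤ -(1 - (n + 2) / (2 * t)) * N t / (1 - N t)
    rw [le_div_iff₀ hd]
    nlinarith [mul_nonneg hN0 h3, mul_nonneg hN0 (by linarith : (0:ℝ) ≤ 1 - 2 * N t)]
  have hup : ∀ t ∈ Set.Ici a, g t ≤ -(1/2) * N t := by
    intro t ht
    obtain ⟨h1, h2, h3⟩ := facts t ht
    have hN0 : 0 ≤ N t := hNnonneg t ht
    have hd : (0:ℝ) < 1 - N t := by linarith
    show -(1 - (n + 2) / (2 * t)) * N t / (1 - N t) ≤ -(1/2) * N t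
    rw [div_le_iff₀ hd]
    nlinarith [mul_nonneg hN0 h3, mul_nonneg hN0 hd.le]
  -- continuity of g
  have hdiv : ContinuousOn (fun t : ℝ => (n+2)/(2*t)) (Set.Ici a) := by
    apply ContinuousOn.div continuousOn_const
      (continuous_const.mul continuous_id).continuousOn
    intro t ht
    have : 0 < t := lt_of_lt_of_le hapos ht
    show (2:ℝ) * t ≠ 0
    positivity
  have hgcont : ContinuousOn g (Set.Ici a) := by
    apply ContinuousOn.div
    · exact ((continuousOn_const.sub hdiv).neg.mul hNcont)
    · exact continuousOn_const.sub hNcont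
    · intro t ht
      have := (facts t ht).1
      intro h; rw [sub_eq_zero] at h; rw [← h] at this; linarith
  have hsub : Set.uIcc a c ⊆ Set.Ici a := by
    rw [Set.uIcc_of_le hc]; exact fun x hx => hx.1
  -- log P has derivative g
  have hf : ∀ t ∈ Set.Ici a, HasDerivAt (fun s => Real.log (P s)) (g t) t := by
    intro t ht
    have hPt := hPpos t ht
    have := (hP t ht).log (ne_of_gt hPt)
    convert this using 1
    rw [mul_div_cancel_right₀ _ (ne_of_gt hPt)]
  -- integrability
  have hgint : IntervalIntegrable g MeasureTheory.volume a c :=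
    (hgcont.mono hsub).intervalIntegrable
  have hNint : IntervalIntegrable N MeasureTheory.volume a c :=
    (hNcont.mono hsub).intervalIntegrable
  have hFTC : ∫ t in a..c, g t = Real.log (P c) - Real.log (P a) :=
    intervalIntegral.integral_eq_sub_of_hasDerivAt
      (fun t ht => hf t (hsub ht)) hgint
  have hmem : ∀ t ∈ Set.Icc a c, t ∈ Set.Ici a := fun t ht => ht.1
  have hI1 : ∫ t in a..c, (-2 : ℝ) * N t ≤ ∫ t in a..c, g t :=
    intervalIntegral.integral_mono_on hc (hNint.const_mul (-2)) hgint
      (fun t ht => hlow t (hmem t ht))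
  have hI2 : ∫ t in a..c, g t ≤ ∫ t in a..c, (-(1/2) : ℝ) * N t :=
    intervalIntegral.integral_mono_on hc hgint (hNint.const_mul (-(1/2)))
      (fun t ht => hup t (hmem t ht))
  rw [intervalIntegral.integral_const_mul] at hI1 hI2
  have hPa := hPpos a (le_refl a)
  have hPc := hPpos c hc
  constructor
  · rw [← Real.exp_log hPa, ← Real.exp_add, ← Real.exp_log hPc]
    apply Real.exp_le_exp.mpr
    linarith
  · rw [← Real.exp_log hPa, ← Real.exp_add, ← Real.exp_log hPc]
    apply Real.exp_le_exp.mpr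
    linarith
end
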